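/- For every μ ∈ ℂ, the map v ↦ Γ v̄ is a conjugate-linear bijection from the eigenspace of D for the eigenvalue μ onto the eigenspace of D for the eigenvalue −μ̄; in particular, these two eigenspaces have the same dimension over ℂ. -/

import Mathlib

open Matrix

private lemma mapconj_mulVec {N : ℕ} (A : Matrix (Fin N ⊕ Fin N) (Fin N ⊕ Fin N) ℂ)
    (v : Fin N ⊕ Fin N → ℂ) :
    (A.map (starRingEnd ℂ)).mulVec (star v) = star (A.mulVec v) := by
  funext i
  simp [Matrix.mulVec, dotProduct, map_sum]

/-- `v ↦ Γ v̄` is a conjugate-linear bijection from the `μ`-eigenspace of `D`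
onto the `(-μ̄)`-eigenspace; in particular those eigenspaces have the same dimension. -/
theorem stmt_3 {N : ℕ} (hN : 0 < N)
    (R Ω : Matrix (Fin N ⊕ Fin N) (Fin N ⊕ Fin N) ℂ)
    (hR : R.IsHermitian) (hΩ : Ω.IsHermitian)
    (Γ : Matrix (Fin N ⊕ Fin N) (Fin N ⊕ Fin N) ℂ)
    (hΓ : Γ = Matrix.fromBlocks 0 1 1 0)
    (hRconj : Γ * R.map (starRingEnd ℂ) * Γ = -R)
    (hΩconj : Γ * Ω.map (starRingEnd ℂ) * Γ = Ω)
    (hRunit : IsUnit R.det)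
    (D : Matrix (Fin N ⊕ Fin N) (Fin N ⊕ Fin N) ℂ) (hD : D = R⁻¹ * Ω)
    (μ : ℂ) :
    (∃ e : Module.End.eigenspace (Matrix.mulVecLin D) μ ≃ₛₗ[starRingEnd ℂ]
        Module.End.eigenspace (Matrix.mulVecLin D) (-(starRingEnd ℂ μ)),
      ∀ x : Module.End.eigenspace (Matrix.mulVecLin D) μ,
        (e x : Fin N ⊕ Fin N → ℂ) = Γ.mulVec (star (x : Fin N ⊕ Fin N → ℂ))) ∧
    Module.finrank ℂ (Module.End.eigenspace (Matrix.mulVecLin D) μ)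
      = Module.finrank ℂ (Module.End.eigenspace (Matrix.mulVecLin D) (-(starRingEnd ℂ μ))) := by
  have c := starRingEnd ℂ
  -- Γ² = 1
  have hΓ2 : Γ * Γ = 1 := by
    rw [hΓ]
    simp [Matrix.fromBlocks_multiply, ← Matrix.fromBlocks_one]
  -- Γ is real
  have hΓreal : Γ.map (starRingEnd ℂ) = Γ := by
    rw [hΓ]
    simp [Matrix.fromBlocks_map]
  -- conjugates of R, Ω
  have hRc : R.map (starRingEnd ℂ) = -(Γ * R * Γ) := by
    have := congrArg (fun M => Γ * M * Γ) hRconj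
    calc R.map (starRingEnd ℂ)
        = Γ * (Γ * R.map (starRingEnd ℂ) * Γ) * Γ := by
          rw [show Γ * (Γ * R.map (starRingEnd ℂ) * Γ) * Γ
              = (Γ * Γ) * R.map (starRingEnd ℂ) * (Γ * Γ) by noncomm_ring, hΓ2]; noncomm_ring
      _ = Γ * (-R) * Γ := by rw [hRconj]
      _ = -(Γ * R * Γ) := by noncomm_ring
  have hΩc : Ω.map (starRingEnd ℂ) = Γ * Ω * Γ := by
    calc Ω.map (starRingEnd ℂ)
        = Γ * (Γ * Ω.map (starRingEnd ℂ) * Γ) * Γ := by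
          rw [show Γ * (Γ * Ω.map (starRingEnd ℂ) * Γ) * Γ
              = (Γ * Γ) * Ω.map (starRingEnd ℂ) * (Γ * Γ) by noncomm_ring, hΓ2]; noncomm_ring
      _ = Γ * Ω * Γ := by rw [hΩconj]
  -- inverse facts
  have hRinv : R⁻¹ * R = 1 := Matrix.nonsing_inv_mul R hRunit
  have hRinv' : R * R⁻¹ = 1 := Matrix.mul_nonsing_inv R hRunit
  -- conjugate of R⁻¹
  have hRic : (R⁻¹).map (starRingEnd ℂ) = -(Γ * R⁻¹ * Γ) := by
    have hleft : (-(Γ * R⁻¹ * Γ)) * R.map (starRingEnd ℂ) = 1 := by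
      rw [hRc]
      calc (-(Γ * R⁻¹ * Γ)) * -(Γ * R * Γ) = Γ * R⁻¹ * (Γ * Γ) * R * Γ := by noncomm_ring
        _ = Γ * (R⁻¹ * R) * Γ := by rw [hΓ2]; noncomm_ring
        _ = 1 := by rw [hRinv, mul_one, hΓ2]
    have hright : R.map (starRingEnd ℂ) * (R⁻¹).map (starRingEnd ℂ) = 1 := by
      rw [← Matrix.map_mul, hRinv']
      simp
    calc (R⁻¹).map (starRingEnd ℂ)
        = 1 * (R⁻¹).map (starRingEnd ℂ) := by rw [one_mul]
      _ = (-(Γ * R⁻¹ * Γ)) * (R.map (starRingEnd ℂ) * (R⁻¹).map (starRingEnd ℂ)) := by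
          rw [← hleft]; noncomm_ring
      _ = -(Γ * R⁻¹ * Γ) := by rw [hright, mul_one]
  -- conjugate of D
  have hDc : D.map (starRingEnd ℂ) = -(Γ * D * Γ) := by
    rw [hD, Matrix.map_mul, hRic, hΩc]
    calc (-(Γ * R⁻¹ * Γ)) * (Γ * Ω * Γ) = -(Γ * R⁻¹ * (Γ * Γ) * Ω * Γ) := by noncomm_ring
      _ = -(Γ * (R⁻¹ * Ω) * Γ) := by rw [hΓ2]; noncomm_ring
  -- key matrix identity
  have hDΓ : D * Γ = -(Γ * D.map (starRingEnd ℂ)) := by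
    rw [hDc]
    calc D * Γ = (Γ * Γ) * D * Γ := by rw [hΓ2]; noncomm_ring
      _ = -(Γ * -(Γ * D * Γ)) := by noncomm_ring
  -- key vector identity
  have hkey : ∀ v : Fin N ⊕ Fin N → ℂ,
      D.mulVec (Γ.mulVec (star v)) = -(Γ.mulVec (star (D.mulVec v))) := by
    intro v
    rw [Matrix.mulVec_mulVec, hDΓ, Matrix.neg_mulVec, ← Matrix.mulVec_mulVec,
      mapconj_mulVec]
  -- eigenvector mapping
  have hmem : ∀ (ν : ℂ) (v : Fin N ⊕ Fin N → ℂ),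
      v ∈ Module.End.eigenspace (Matrix.mulVecLin D) ν →
      Γ.mulVec (star v) ∈ Module.End.eigenspace (Matrix.mulVecLin D) (-(starRingEnd ℂ ν)) := by
    intro ν v hv
    rw [Module.End.mem_eigenspace_iff] at hv ⊢
    rw [Matrix.mulVecLin_apply] at hv ⊢
    rw [hkey, hv]
    rw [star_smul, Matrix.mulVec_smul]
    simp [neg_smul]
  have hJJ : ∀ v : Fin N ⊕ Fin N → ℂ, Γ.mulVec (star (Γ.mulVec (star v))) = v := by
    intro v
    rw [← mapconj_mulVec, hΓreal, star_star, Matrix.mulVec_mulVec, hΓ2]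
    simp
  have hμ2 : -(starRingEnd ℂ (-(starRingEnd ℂ μ))) = μ := by simp
  refine ⟨⟨{
      toFun := fun x => ⟨Γ.mulVec (star (x : Fin N ⊕ Fin N → ℂ)), hmem μ _ x.2⟩
      map_add' := by
        intro x y
        ext
        simp [star_add, Matrix.mulVec_add]
      map_smul' := by
        intro a x
        ext
        simp [star_smul, Matrix.mulVec_smul]
      invFun := fun x => ⟨Γ.mulVec (star (x : Fin N ⊕ Fin N → ℂ)), by
        have h := hmem _ _ x.2
        rwa [hμ2] at h⟩
      left_inv := by intro x; exact Subtype.ext (hJJ _)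
      right_inv := by intro x; exact Subtype.ext (hJJ _) }, fun x => rfl⟩, ?_⟩
  -- finrank equality
  obtain ⟨e, -⟩ : (∃ e : Module.End.eigenspace (Matrix.mulVecLin D) μ ≃ₛₗ[starRingEnd ℂ]
        Module.End.eigenspace (Matrix.mulVecLin D) (-(starRingEnd ℂ μ)),
      ∀ x : Module.End.eigenspace (Matrix.mulVecLin D) μ,
        (e x : Fin N ⊕ Fin N → ℂ) = Γ.mulVec (star (x : Fin N ⊕ Fin N → ℂ))) := by
    exact ⟨{
      toFun := fun x => ⟨Γ.mulVec (star (x : Fin N ⊕ Fin N → ℂ)), hmem μ _ x.2⟩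
      map_add' := by
        intro x y
        ext
        simp [star_add, Matrix.mulVec_add]
      map_smul' := by
        intro a x
        ext
        simp [star_smul, Matrix.mulVec_smul]
      invFun := fun x => ⟨Γ.mulVec (star (x : Fin N ⊕ Fin N → ℂ)), by
        have h := hmem _ _ x.2
        rwa [hμ2] at h⟩
      left_inv := by intro x; exact Subtype.ext (hJJ _)
      right_inv := by intro x; exact Subtype.ext (hJJ _) }, fun x => rfl⟩
  have hrank : Module.rank ℂ (Module.End.eigenspace (Matrix.mulVecLin D) μ)
      = Module.rank ℂ (Module.End.eigenspace (Matrix.mulVecLin D) (-(starRingEnd ℂ μ))) := by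
    refine rank_eq_of_equiv_equiv (⟨(starRingEnd ℂ), map_zero _⟩ : ZeroHom ℂ ℂ)
      e.toAddEquiv ⟨fun a b h => by simpa using congrArg (starRingEnd ℂ) h,
        fun a => ⟨starRingEnd ℂ a, by simp⟩⟩ (fun r m => ?_)
    exact e.map_smul' r m
  simp [Module.finrank, hrank]
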